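/- Let λ, μ be real numbers with λ ≥ 1 and μ > 1/2. Then for every z in the open unit disc 𝕌, the Alexander transform of the normalized Wright function satisfies |𝔸[𝒲_{λ,μ}](z)| ≤ 2μ/(2μ−1). -/

import Mathlib

open Real Filter Finset Topology

lemma exp_two_mul_le_aux : ∀ t : ℝ, 0 ≤ t → (1 - t) * Real.exp (2 * t) ≤ 1 + t := by
  have hmono : MonotoneOn (fun s : ℝ => 1 + s - (1 - s) * Real.exp (2 * s)) (Set.Ici 0) := by
    have hder : ∀ s : ℝ, HasDerivAt (fun s : ℝ => 1 + s - (1 - s) * Real.exp (2 * s))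
        (1 - ((-1) * Real.exp (2 * s) + (1 - s) * (Real.exp (2 * s) * 2))) s := by
      intro s
      have h1 : HasDerivAt (fun x : ℝ => 1 - x) (-1) s := (hasDerivAt_id s).const_sub 1
      have h2 : HasDerivAt (fun x : ℝ => Real.exp (2 * x)) (Real.exp (2 * s) * 2) s := by
        have := (Real.hasDerivAt_exp (2 * s)).comp s ((hasDerivAt_id s).const_mul 2)
        simpa [Function.comp_def, mul_comm] using this
      have h3 := h1.mul h2
      have h4 : HasDerivAt (fun x : ℝ => 1 + x) 1 s := (hasDerivAt_id s).const_add 1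
      exact h4.sub h3
    apply monotoneOn_of_deriv_nonneg (convex_Ici 0)
    · exact (Continuous.continuousOn (by continuity))
    · intro s _
      exact (hder s).differentiableAt.differentiableWithinAt
    · intro s hs
      rw [interior_Ici] at hs
      rw [(hder s).deriv]
      have hE : (0:ℝ) < Real.exp (2 * s) := Real.exp_pos _
      have key : (1 - 2 * s) * Real.exp (2 * s) ≤ 1 := by
        rcases le_or_gt (1 - 2 * s) 0 with h | h
        · nlinarith
        · have h5 : 1 - 2 * s ≤ Real.exp (-(2 * s)) := by
            have := Real.add_one_le_exp (-(2 * s)); linarith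
          have h6 := mul_le_mul_of_nonneg_right h5 hE.le
          rw [← Real.exp_add] at h6
          simpa using h6
        
      nlinarith
  intro t ht
  have := hmono (Set.self_mem_Ici) (Set.mem_Ici.mpr ht) ht
  simp at this
  nlinarith

lemma log_ratio_aux (j : ℕ) : (2 : ℝ) / (2 * j + 3) ≤ Real.log (((j : ℝ) + 2) / ((j : ℝ) + 1)) := by
  set t : ℝ := 1 / (2 * (j : ℝ) + 3) with ht
  have hden : (0:ℝ) < 2 * (j:ℝ) + 3 := by positivity
  have ht0 : 0 ≤ t := by positivity
  have ht1 : t < 1 := by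
    rw [ht, div_lt_one hden]; nlinarith [Nat.cast_nonneg (α := ℝ) j]
  have h := exp_two_mul_le_aux t ht0
  have hq : (0:ℝ) < ((j : ℝ) + 2) / ((j : ℝ) + 1) := by positivity
  have hexp : Real.exp (2 * t) ≤ ((j : ℝ) + 2) / ((j : ℝ) + 1) := by
    have h1t : (0:ℝ) < 1 - t := by linarith
    rw [← le_div_iff₀' h1t] at h
    refine h.trans (le_of_eq ?_)
    have hj1 : ((j:ℝ) + 1) ≠ 0 := by positivity
    have hd3 : (2 * (j:ℝ) + 3) ≠ 0 := ne_of_gt hden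
    have e1 : 1 + t = (2 * (j:ℝ) + 4) / (2 * (j:ℝ) + 3) := by
      rw [ht]; field_simp; ring
    have e2 : 1 - t = (2 * (j:ℝ) + 2) / (2 * (j:ℝ) + 3) := by
      rw [ht]; field_simp; ring
    have hj2 : (2 * (j:ℝ) + 2) ≠ 0 := by positivity
    rw [e1, e2]
    field_simp
    ring
  have h2t : (2:ℝ) / (2 * j + 3) = 2 * t := by rw [ht]; ring
  rw [h2t]
  exact (Real.le_log_iff_exp_le hq).mpr hexp

lemma prod_telescope (m : ℕ) : ∏ j ∈ range m, (((j : ℝ) + 2) / ((j : ℝ) + 1)) = (m : ℝ) + 1 := by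
  induction m with
  | zero => simp
  | succ n ih =>
    rw [Finset.prod_range_succ, ih]
    have : ((n : ℝ) + 1) ≠ 0 := by positivity
    field_simp
    push_cast
    ring

lemma Gamma_mono_aux {x y : ℝ} (hx : 3 / 2 ≤ x) (hxy : x ≤ y) :
    Real.Gamma x ≤ Real.Gamma y := by
  have hx0 : (0:ℝ) < x := by linarith
  have hy0 : (0:ℝ) < y := by linarith
  set d : ℝ := y - x with hd
  have hd0 : 0 ≤ d := by simp [hd]; linarith
  have key : ∀ n : ℕ, 1 ≤ n →
      Real.GammaSeq x n ≤ (((n : ℝ) + 2) / n) ^ d * Real.GammaSeq y n := by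
    intro n hn
    have hn0 : (0:ℝ) < n := by exact_mod_cast hn
    have hPx : (0:ℝ) < ∏ j ∈ range (n + 1), (x + j) := by
      apply Finset.prod_pos; intro j _; positivity
    have hPy : (0:ℝ) < ∏ j ∈ range (n + 1), (y + j) := by
      apply Finset.prod_pos; intro j _; positivity
    have hterm : ∀ j ∈ range (n + 1),
        (y + j) ≤ ((((j : ℝ) + 2) / ((j : ℝ) + 1)) ^ d) * (x + j) := by
      intro j _
      have hq : (0:ℝ) < ((j : ℝ) + 2) / ((j : ℝ) + 1) := by positivity
      have h1 : 1 + d * Real.log (((j : ℝ) + 2) / ((j : ℝ) + 1)) ≤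
          (((j : ℝ) + 2) / ((j : ℝ) + 1)) ^ d := by
        rw [Real.rpow_def_of_pos hq, mul_comm (Real.log (((j : ℝ) + 2) / ((j : ℝ) + 1))) d]
        have := Real.add_one_le_exp (d * Real.log (((j : ℝ) + 2) / ((j : ℝ) + 1)))
        linarith
      have h2 : (2 : ℝ) / (2 * j + 3) ≤ Real.log (((j : ℝ) + 2) / ((j : ℝ) + 1)) :=
        log_ratio_aux j
      have hxj : (0:ℝ) < x + j := by positivity
      have h3 : (x + j) * (1 + d * ((2:ℝ) / (2 * j + 3))) ≤
          (x + j) * ((((j : ℝ) + 2) / ((j : ℝ) + 1)) ^ d) := by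
        apply mul_le_mul_of_nonneg_left _ hxj.le
        refine le_trans ?_ h1
        have := mul_le_mul_of_nonneg_left h2 hd0
        linarith
      rw [mul_comm]
      refine le_trans ?_ h3
      have hc : (0:ℝ) < 2 * (j:ℝ) + 3 := by positivity
      have h6 : 1 ≤ (x + (j:ℝ)) * 2 / (2 * (j:ℝ) + 3) := by
        rw [le_div_iff₀ hc]; linarith
      have hyx : y + (j:ℝ) = (x + j) + d := by rw [hd]; ring
      rw [hyx]
      have h7 : d * 1 ≤ d * ((x + (j:ℝ)) * 2 / (2 * (j:ℝ) + 3)) :=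
        mul_le_mul_of_nonneg_left h6 hd0
      have h8 : (x + (j:ℝ)) * (1 + d * (2 / (2 * (j:ℝ) + 3))) =
          (x + (j:ℝ)) + d * ((x + (j:ℝ)) * 2 / (2 * (j:ℝ) + 3)) := by ring
      linarith
    have hprod : (∏ j ∈ range (n + 1), (y + j)) ≤
        ((n : ℝ) + 2) ^ d * ∏ j ∈ range (n + 1), (x + j) := by
      have hle := Finset.prod_le_prod
        (fun j _ => by positivity : ∀ j ∈ range (n+1), (0:ℝ) ≤ y + j) hterm
      refine hle.trans (le_of_eq ?_)
      rw [Finset.prod_mul_distrib]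
      congr 1
      rw [Real.finset_prod_rpow _ _ (fun j _ => by positivity)]
      congr 1
      have := prod_telescope (n + 1)
      push_cast at this ⊢
      linarith
    have hyd : y - d = x := by rw [hd]; ring
    have hnd : ((n:ℝ) ^ d) ≠ 0 := (Real.rpow_pos_of_pos hn0 d).ne'
    have hpow : (((n : ℝ) + 2) / n) ^ d *
          ((n:ℝ) ^ y * (Nat.factorial n : ℝ) / ∏ j ∈ range (n+1), (y + j))
        = ((n:ℝ)+2) ^ d * (n:ℝ) ^ x * (Nat.factorial n : ℝ) /
          ∏ j ∈ range (n+1), (y + j) := by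
      rw [Real.div_rpow (by positivity) hn0.le, ← hyd, Real.rpow_sub hn0]
      field_simp
      ring
      rw [hyd]
    rw [Real.GammaSeq, Real.GammaSeq, hpow, div_le_div_iff₀ hPx hPy]
    calc (n:ℝ) ^ x * (Nat.factorial n : ℝ) * ∏ j ∈ range (n+1), (y + j)
        = ((n:ℝ) ^ x * (Nat.factorial n : ℝ)) * ∏ j ∈ range (n+1), (y + j) := by ring
      _ ≤ ((n:ℝ) ^ x * (Nat.factorial n : ℝ)) *
          (((n : ℝ) + 2) ^ d * ∏ j ∈ range (n+1), (x + j)) := by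
          apply mul_le_mul_of_nonneg_left hprod (by positivity)
      _ = ((n:ℝ)+2) ^ d * (n:ℝ) ^ x * (Nat.factorial n : ℝ) *
          ∏ j ∈ range (n+1), (x + j) := by ring
  have hgx := Real.GammaSeq_tendsto_Gamma x
  have hgy := Real.GammaSeq_tendsto_Gamma y
  have h1 : Tendsto (fun n : ℕ => ((n:ℝ)+2)/n) atTop (𝓝 1) := by
    have heq : (fun n : ℕ => ((n:ℝ)+2)/n) =ᶠ[atTop] (fun n : ℕ => 1 + 2/(n:ℝ)) := by
      filter_upwards [eventually_ge_atTop 1] with n hn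
      have hne : (n:ℝ) ≠ 0 := by
        have : (0:ℝ) < n := by exact_mod_cast hn
        exact this.ne'
      field_simp
    rw [tendsto_congr' heq]
    have h2 := tendsto_const_div_atTop_nhds_zero_nat (2:ℝ)
    simpa using (tendsto_const_nhds (x := (1:ℝ))).add h2
  have hquot : Tendsto (fun n : ℕ => (((n:ℝ)+2)/n) ^ d) atTop (𝓝 1) := by
    have h2 : ContinuousAt (fun b : ℝ => b ^ d) 1 :=
      Real.continuousAt_rpow_const 1 d (Or.inl one_ne_zero)
    have := h2.tendsto.comp h1
    simpa [Real.one_rpow, Function.comp_def] using this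
  have hlim : Tendsto (fun n : ℕ => (((n : ℝ) + 2) / n) ^ d * Real.GammaSeq y n)
      atTop (𝓝 (Real.Gamma y)) := by
    simpa using hquot.mul hgy
  exact le_of_tendsto_of_tendsto hgx hlim
    (by filter_upwards [eventually_ge_atTop 1] with n hn using key n hn)

lemma pochhammer_bound (mu : ℝ) (hmu : 1 / 2 < mu) (m : ℕ) :
    Real.Gamma mu * (2 * mu) ^ m ≤ (Nat.factorial (m + 1) : ℝ) * Real.Gamma ((m : ℝ) + mu) := by
  have hmu0 : (0:ℝ) < mu := by linarith
  induction m with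
  | zero => simp
  | succ k ih =>
    have hk0 : (0:ℝ) < (k:ℝ) + mu := by positivity
    have hG : Real.Gamma (((k:ℕ) + 1 : ℕ) + mu) = ((k:ℝ) + mu) * Real.Gamma ((k:ℝ) + mu) := by
      push_cast
      rw [show (k:ℝ) + 1 + mu = ((k:ℝ) + mu) + 1 by ring, Real.Gamma_add_one hk0.ne']
    rw [hG]
    have hGpos : (0:ℝ) < Real.Gamma ((k:ℝ) + mu) := Real.Gamma_pos_of_pos hk0
    have hfac : (0:ℝ) < (Nat.factorial (k + 1) : ℝ) := by positivity
    have step : (2 * mu) * ((Nat.factorial (k + 1) : ℝ) * Real.Gamma ((k:ℝ) + mu)) ≤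
        (Nat.factorial (k + 2) : ℝ) * (((k:ℝ) + mu) * Real.Gamma ((k:ℝ) + mu)) := by
      have hfs : (Nat.factorial (k + 2) : ℝ) = ((k:ℝ) + 2) * (Nat.factorial (k + 1) : ℝ) := by
        rw [Nat.factorial_succ]
        push_cast
        ring
      rw [hfs]
      have h2mu : 2 * mu ≤ ((k:ℝ) + 2) * ((k:ℝ) + mu) := by
        nlinarith [Nat.cast_nonneg (α := ℝ) k]
      calc (2 * mu) * ((Nat.factorial (k + 1) : ℝ) * Real.Gamma ((k:ℝ) + mu))
          ≤ (((k:ℝ) + 2) * ((k:ℝ) + mu)) * ((Nat.factorial (k + 1) : ℝ) * Real.Gamma ((k:ℝ) + mu)) := by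
            apply mul_le_mul_of_nonneg_right h2mu (by positivity)
        _ = ((k:ℝ) + 2) * (Nat.factorial (k + 1) : ℝ) * (((k:ℝ) + mu) * Real.Gamma ((k:ℝ) + mu)) := by
            ring
    calc Real.Gamma mu * (2 * mu) ^ (k + 1)
        = (2 * mu) * (Real.Gamma mu * (2 * mu) ^ k) := by ring
      _ ≤ (2 * mu) * ((Nat.factorial (k + 1) : ℝ) * Real.Gamma ((k:ℝ) + mu)) := by
          apply mul_le_mul_of_nonneg_left ih (by positivity)
      _ ≤ (Nat.factorial (k + 1 + 1) : ℝ) * (((k:ℝ) + mu) * Real.Gamma ((k:ℝ) + mu)) := step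

lemma coeff_le (lam mu : ℝ) (hlam : 1 ≤ lam) (hmu : 1 / 2 < mu) (m : ℕ) :
    Real.Gamma mu / (Nat.factorial (m + 1) * Real.Gamma (lam * m + mu)) ≤ ((2 * mu)⁻¹) ^ m := by
  have hmu0 : (0:ℝ) < mu := by linarith
  have hlm : (0:ℝ) < lam * m + mu := by
    have : (0:ℝ) ≤ lam * m := by positivity
    linarith
  have hGl : (0:ℝ) < Real.Gamma (lam * m + mu) := Real.Gamma_pos_of_pos hlm
  have hfac : (0:ℝ) < (Nat.factorial (m + 1) : ℝ) := by positivity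
  have h1 : Real.Gamma ((m : ℝ) + mu) ≤ Real.Gamma (lam * m + mu) := by
    rcases Nat.eq_zero_or_pos m with rfl | hm
    · simp
    · apply Gamma_mono_aux
      · have : (1:ℝ) ≤ (m:ℝ) := by exact_mod_cast hm
        linarith
      · have : (m:ℝ) ≤ lam * m := by
          nlinarith [Nat.cast_nonneg (α := ℝ) m]
        linarith
  have h2 := pochhammer_bound mu hmu m
  have key : Real.Gamma mu * (2 * mu) ^ m ≤
      (Nat.factorial (m + 1) : ℝ) * Real.Gamma (lam * m + mu) := by
    refine h2.trans ?_
    apply mul_le_mul_of_nonneg_left h1 hfac.le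
  rw [inv_pow, div_le_iff₀ (by positivity), inv_mul_eq_div,
    le_div_iff₀ (by positivity : (0:ℝ) < (2*mu)^m)]
  exact key

/-- The Alexander transform of the normalized Wright function:
`𝔸[𝒲_{λ,μ}](z) = z + ∑_{m=1}^∞ (Γ(μ)/((m+1)! Γ(λm+μ))) z^{m+1}`
(the `m = 0` term is `z`). -/
noncomputable def alexNormWright (lam mu : ℝ) (z : ℂ) : ℂ :=
  ∑' m : ℕ,
    ((Real.Gamma mu / (Nat.factorial (m + 1) * Real.Gamma (lam * m + mu)) : ℝ) : ℂ) * z ^ (m + 1)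

/-- If `λ ≥ 1` and `μ > 1/2`, then `|𝔸[𝒲_{λ,μ}](z)| ≤ 2μ/(2μ-1)` on the open unit disc. -/
theorem abs_alexNormWright_le (lam mu : ℝ) (hlam : 1 ≤ lam) (hmu : 1 / 2 < mu) :
    ∀ z : ℂ, ‖z‖ < 1 → ‖alexNormWright lam mu z‖ ≤ 2 * mu / (2 * mu - 1) := by
  intro z hz
  have hmu0 : (0:ℝ) < mu := by linarith
  set r : ℝ := (2 * mu)⁻¹ with hr
  have hr0 : 0 ≤ r := by positivity
  have hr1 : r < 1 := by
    rw [hr]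
    have h1 : (1:ℝ) < 2 * mu := by linarith
    rw [inv_lt_one_iff₀]
    right; exact h1
  have hgeo := hasSum_geometric_of_lt_one hr0 hr1
  have hb : ∀ m : ℕ,
      ‖((Real.Gamma mu / (Nat.factorial (m + 1) * Real.Gamma (lam * m + mu)) : ℝ) : ℂ) *
        z ^ (m + 1)‖ ≤ r ^ m := by
    intro m
    set c : ℝ := Real.Gamma mu / (Nat.factorial (m + 1) * Real.Gamma (lam * m + mu)) with hc
    have hlm : (0:ℝ) < lam * m + mu := by
      have : (0:ℝ) ≤ lam * m := by positivity
      linarith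
    have hc0 : 0 ≤ c := by
      rw [hc]
      apply div_nonneg (Real.Gamma_pos_of_pos hmu0).le
      have := Real.Gamma_pos_of_pos hlm
      positivity
    have hnorm : ‖((c : ℝ) : ℂ) * z ^ (m + 1)‖ = c * ‖z‖ ^ (m + 1) := by
      rw [norm_mul, norm_pow, Complex.norm_real, Real.norm_eq_abs, abs_of_nonneg hc0]
    rw [hnorm]
    calc c * ‖z‖ ^ (m + 1) ≤ c * 1 := by
          apply mul_le_mul_of_nonneg_left _ hc0
          exact pow_le_one₀ (norm_nonneg z) hz.le
      _ = c := by ring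
      _ ≤ r ^ m := coeff_le lam mu hlam hmu m
  have hfinal := tsum_of_norm_bounded hgeo hb
  rw [alexNormWright]
  refine hfinal.trans (le_of_eq ?_)
  have h2 : 1 - r = (2 * mu - 1) / (2 * mu) := by
    rw [hr]
    field_simp
  rw [h2, inv_div]
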